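/- For every L ∈ ℤ₊ and every continuous map a : [1, 1+2^L] → ℂ, the 2-variation of a over [1, 1+2^L] satisfies V²(a_s : s ∈ [1, 1+2^L]) ≤ √2 · Σ_{l ∈ ℤ₊} ( Σ_{j=1}^{2^l} |a_{1+j·2^{L-l}} − a_{1+(j−1)·2^{L-l}}|² )^{1/2}. -/

import Mathlib

section RMAux
open Finset


noncomputable def dinc (f : ℕ → ℂ) (M l k : ℕ) : ℂ :=
  f ((k + 1) * 2 ^ (M - l)) - f (k * 2 ^ (M - l))

/-- A decomposition of the increment `f t - f s` into dyadic increments at levels `1..M`,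
with at most `c` increments per level, all lying inside `[s,t]`. -/
def Decomp (f : ℕ → ℂ) (M s t c : ℕ) (C : Finset (ℕ × ℕ)) : Prop :=
  (∀ p ∈ C, 1 ≤ p.1 ∧ p.1 ≤ M ∧ s ≤ p.2 * 2 ^ (M - p.1) ∧ (p.2 + 1) * 2 ^ (M - p.1) ≤ t) ∧
  (∀ l, (C.filter (fun p => p.1 = l)).card ≤ c) ∧
  f t - f s = ∑ p ∈ C, dinc f M p.1 p.2

lemma Decomp.mono {f M s t c c' C} (h : Decomp f M s t c C) (hcc : c ≤ c') :
    Decomp f M s t c' C :=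
  ⟨h.1, fun l => (h.2.1 l).trans hcc, h.2.2⟩

lemma decomp_nil (f : ℕ → ℂ) (M s c : ℕ) : Decomp f M s s c ∅ := by
  refine ⟨by simp, by simp, by simp⟩

lemma decomp_left {f : ℕ → ℂ} {M s t c C} (h : Decomp f M s t c C) :
    Decomp f (M + 1) s t c (C.image (fun p => (p.1 + 1, p.2))) := by
  obtain ⟨ha, hb, hc⟩ := h
  have hinj : Set.InjOn (fun p : ℕ × ℕ => (p.1 + 1, p.2)) C := by
    intro p _ q _ hpq
    simpa [Prod.ext_iff] using hpq
  refine ⟨?_, ?_, ?_⟩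
  · intro p hp
    simp only [mem_image] at hp
    obtain ⟨q, hq, rfl⟩ := hp
    obtain ⟨h1, h2, h3, h4⟩ := ha q hq
    exact ⟨by omega, by omega, by simpa [Nat.succ_sub_succ] using h3,
      by simpa [Nat.succ_sub_succ] using h4⟩
  · intro l
    have : ((C.image (fun p : ℕ × ℕ => (p.1 + 1, p.2))).filter (fun p => p.1 = l)).card ≤
        (C.filter (fun p => p.1 + 1 = l)).card := by
      rw [Finset.filter_image]
      exact (Finset.card_image_le).trans (le_of_eq rfl)
    refine this.trans ?_
    rcases Nat.eq_zero_or_pos l with rfl | hl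
    · simp
    · obtain ⟨l', rfl⟩ := Nat.exists_eq_add_of_le hl
      have : (C.filter (fun p => p.1 + 1 = 1 + l')).card ≤
          (C.filter (fun p => p.1 = l')).card := by
        apply Finset.card_le_card
        intro p hp
        simp only [mem_filter] at hp ⊢
        exact ⟨hp.1, by omega⟩
      exact this.trans (hb l')
  · rw [Finset.sum_image hinj, hc]
    apply Finset.sum_congr rfl
    intro p hp
    simp [dinc, Nat.succ_sub_succ]

lemma decomp_right {f : ℕ → ℂ} {M s t c C}
    (h : Decomp (fun n => f (2 ^ M + n)) M s t c C) :
    Decomp f (M + 1) (2 ^ M + s) (2 ^ M + t) c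
      (C.image (fun p => (p.1 + 1, p.2 + 2 ^ p.1))) := by
  obtain ⟨ha, hb, hc⟩ := h
  have hinj : Set.InjOn (fun p : ℕ × ℕ => (p.1 + 1, p.2 + 2 ^ p.1)) C := by
    intro p _ q _ hpq
    simp only [Prod.ext_iff] at hpq
    obtain ⟨h1, h2⟩ := hpq
    have hl : p.1 = q.1 := by omega
    rw [hl] at h2
    exact Prod.ext hl (by omega)
  have key : ∀ p ∈ C, (p.2 + 2 ^ p.1) * 2 ^ (M + 1 - (p.1 + 1)) = 2 ^ M + p.2 * 2 ^ (M - p.1) := by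
    intro p hp
    obtain ⟨h1, h2, _, _⟩ := ha p hp
    rw [Nat.succ_sub_succ, add_mul, ← pow_add]
    rw [Nat.add_sub_cancel' h2]
    ring
  refine ⟨?_, ?_, ?_⟩
  · intro p hp
    simp only [mem_image] at hp
    obtain ⟨q, hq, rfl⟩ := hp
    obtain ⟨h1, h2, h3, h4⟩ := ha q hq
    refine ⟨by omega, by omega, ?_, ?_⟩
    · rw [key q hq]; omega
    · have : (q.2 + 2 ^ q.1 + 1) * 2 ^ (M + 1 - (q.1 + 1)) =
          2 ^ M + (q.2 + 1) * 2 ^ (M - q.1) := by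
        rw [Nat.succ_sub_succ, add_mul, add_mul, ← pow_add, Nat.add_sub_cancel' h2]
        ring
      rw [this]; omega
  · intro l
    have : ((C.image (fun p : ℕ × ℕ => (p.1 + 1, p.2 + 2 ^ p.1))).filter
        (fun p => p.1 = l)).card ≤ (C.filter (fun p => p.1 + 1 = l)).card := by
      rw [Finset.filter_image]
      exact Finset.card_image_le
    refine this.trans ?_
    rcases Nat.eq_zero_or_pos l with rfl | hl
    · simp
    · obtain ⟨l', rfl⟩ := Nat.exists_eq_add_of_le hl
      have : (C.filter (fun p => p.1 + 1 = 1 + l')).card ≤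
          (C.filter (fun p => p.1 = l')).card := by
        apply Finset.card_le_card
        intro p hp
        simp only [mem_filter] at hp ⊢
        exact ⟨hp.1, by omega⟩
      exact this.trans (hb l')
  · rw [Finset.sum_image hinj]
    have : f (2 ^ M + t) - f (2 ^ M + s)
        = ∑ p ∈ C, dinc (fun n => f (2 ^ M + n)) M p.1 p.2 := hc
    rw [this]
    apply Finset.sum_congr rfl
    intro p hp
    obtain ⟨h1, h2, _, _⟩ := ha p hp
    simp only [dinc]
    have e1 : (p.2 + 2 ^ p.1 + 1) * 2 ^ (M + 1 - (p.1 + 1)) =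
        2 ^ M + (p.2 + 1) * 2 ^ (M - p.1) := by
      rw [Nat.succ_sub_succ, add_mul, add_mul, ← pow_add, Nat.add_sub_cancel' h2]
      ring
    rw [e1, key p hp]

lemma decomp_union {f : ℕ → ℂ} {M s m t c1 c2 C1 C2}
    (h1 : Decomp f M s m c1 C1) (h2 : Decomp f M m t c2 C2)
    (hsm : s ≤ m) (hmt : m ≤ t) (hdisj : Disjoint C1 C2) :
    Decomp f M s t (c1 + c2) (C1 ∪ C2) := by
  obtain ⟨ha1, hb1, hc1⟩ := h1
  obtain ⟨ha2, hb2, hc2⟩ := h2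
  refine ⟨?_, ?_, ?_⟩
  · intro p hp
    rcases Finset.mem_union.1 hp with hp | hp
    · obtain ⟨x1, x2, x3, x4⟩ := ha1 p hp
      exact ⟨x1, x2, x3, x4.trans hmt⟩
    · obtain ⟨x1, x2, x3, x4⟩ := ha2 p hp
      exact ⟨x1, x2, hsm.trans x3, x4⟩
  · intro l
    rw [Finset.filter_union]
    exact (Finset.card_union_le _ _).trans (add_le_add (hb1 l) (hb2 l))
  · rw [Finset.sum_union hdisj]
    rw [← hc1, ← hc2]; ring

lemma exists_decompR : ∀ (M : ℕ) (f : ℕ → ℂ) (s : ℕ), 0 < s → s ≤ 2 ^ M →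
    ∃ C, Decomp f M s (2 ^ M) 1 C := by
  intro M
  induction M with
  | zero =>
    intro f s h1 h2
    have : s = 1 := by omega
    subst this
    exact ⟨∅, decomp_nil f 0 1 1⟩
  | succ M ih =>
    intro f s hs hs2
    by_cases hle : s ≤ 2 ^ M
    · -- left part plus top-level increment (1,1)
      obtain ⟨C, hC⟩ := ih f s hs hle
      refine ⟨insert (1, 1) (C.image (fun p => (p.1 + 1, p.2))), ?_⟩
      have hCl := decomp_left (f := f) hC
      obtain ⟨ha, hb, hc⟩ := hCl
      have hnotmem : (1, 1) ∉ C.image (fun p : ℕ × ℕ => (p.1 + 1, p.2)) := by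
        intro hmem
        simp only [mem_image, Prod.ext_iff] at hmem
        obtain ⟨p, hp, h1, h2⟩ := hmem
        obtain ⟨hp1, _, _, _⟩ := (hC.1) p hp
        omega
      refine ⟨?_, ?_, ?_⟩
      · intro p hp
        rcases Finset.mem_insert.1 hp with rfl | hp
        · refine ⟨le_refl 1, by omega, ?_, ?_⟩
          · simp only [Nat.add_sub_cancel, one_mul]
            exact hle
          · simp only [Nat.add_sub_cancel]
            rw [pow_succ]
            omega
        · obtain ⟨x1, x2, x3, x4⟩ := ha p hp
          exact ⟨x1, x2, x3, x4.trans (by rw [pow_succ]; omega)⟩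
      · intro l
        rw [Finset.filter_insert]
        by_cases hl : (1 : ℕ) = l
        · subst hl
          rw [if_pos rfl]
          have : (C.image (fun p : ℕ × ℕ => (p.1 + 1, p.2))).filter
              (fun p => p.1 = 1) = ∅ := by
            apply Finset.filter_eq_empty_iff.2
            intro p hp
            simp only [mem_image] at hp
            obtain ⟨q, hq, rfl⟩ := hp
            obtain ⟨hq1, _, _, _⟩ := hC.1 q hq
            omega
          rw [this]
          simp
        · rw [if_neg hl]
          exact hb l
      · rw [Finset.sum_insert hnotmem, ← hc]
        have e2 : (1 + 1) * 2 ^ M = 2 ^ (M + 1) := by rw [pow_succ]; omega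
        have : dinc f (M + 1) 1 1 = f (2 ^ (M + 1)) - f (2 ^ M) := by
          simp only [dinc, Nat.add_sub_cancel, e2, one_mul]
        rw [this]
        ring
    · -- s in right half
      push_neg at hle
      rcases Nat.lt_or_ge (2 ^ M) s with hlt | hge
      · obtain ⟨C, hC⟩ := ih (fun n => f (2 ^ M + n)) (s - 2 ^ M) (by omega) (by
          rw [pow_succ] at hs2; omega)
        refine ⟨C.image (fun p => (p.1 + 1, p.2 + 2 ^ p.1)), ?_⟩
        have := decomp_right (f := f) hC
        rw [Nat.add_sub_cancel' (le_of_lt hlt)] at this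
        have h2 : 2 ^ M + 2 ^ M = 2 ^ (M + 1) := by rw [pow_succ]; omega
        rw [h2] at this
        exact this
      · omega

lemma exists_decompL : ∀ (M : ℕ) (f : ℕ → ℂ) (t : ℕ), t < 2 ^ M →
    ∃ C, Decomp f M 0 t 1 C := by
  intro M
  induction M with
  | zero =>
    intro f t ht
    have : t = 0 := by omega
    subst this
    exact ⟨∅, decomp_nil f 0 0 1⟩
  | succ M ih =>
    intro f t ht
    rcases Nat.lt_or_ge t (2 ^ M) with hlt | hge
    · obtain ⟨C, hC⟩ := ih f t hlt
      exact ⟨_, decomp_left hC⟩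
    · rcases Nat.eq_or_lt_of_le hge with heq | hlt'
      · -- t = 2 ^ M
        refine ⟨{(1, 0)}, ?_, ?_, ?_⟩
        · intro p hp
          simp only [Finset.mem_singleton] at hp
          subst hp
          refine ⟨le_refl 1, by omega, by omega, ?_⟩
          simp only [Nat.add_sub_cancel]
          omega
        · intro l
          exact (Finset.card_filter_le _ _).trans (by simp)
        · rw [Finset.sum_singleton]
          simp only [dinc, Nat.add_sub_cancel]
          rw [← heq]
          norm_num
      · -- 2 ^ M < t : top-level increment (1,0) plus right part
        obtain ⟨C, hC⟩ := ih (fun n => f (2 ^ M + n)) (t - 2 ^ M) (by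
          rw [pow_succ] at ht; omega)
        have hCr := decomp_right (f := f) hC
        rw [Nat.add_sub_cancel' (le_of_lt hlt'), Nat.add_zero] at hCr
        obtain ⟨ha, hb, hc⟩ := hCr
        refine ⟨insert (1, 0) (C.image (fun p => (p.1 + 1, p.2 + 2 ^ p.1))), ?_, ?_, ?_⟩
        · intro p hp
          rcases Finset.mem_insert.1 hp with rfl | hp
          · refine ⟨le_refl 1, by omega, by omega, ?_⟩
            simp only [Nat.add_sub_cancel]
            omega
          · obtain ⟨x1, x2, x3, x4⟩ := ha p hp
            exact ⟨x1, x2, le_trans (Nat.zero_le _) x3, x4⟩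
        · intro l
          rw [Finset.filter_insert]
          by_cases hl : (1 : ℕ) = l
          · subst hl
            rw [if_pos rfl]
            have : (C.image (fun p : ℕ × ℕ => (p.1 + 1, p.2 + 2 ^ p.1))).filter
                (fun p => p.1 = 1) = ∅ := by
              apply Finset.filter_eq_empty_iff.2
              intro p hp
              simp only [mem_image] at hp
              obtain ⟨q, hq, rfl⟩ := hp
              obtain ⟨hq1, _, _, _⟩ := hC.1 q hq
              omega
            rw [this]
            simp
          · rw [if_neg hl]
            exact hb l
        · have hnotmem : (1, 0) ∉ C.image (fun p : ℕ × ℕ => (p.1 + 1, p.2 + 2 ^ p.1)) := by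
            intro hmem
            simp only [mem_image, Prod.ext_iff] at hmem
            obtain ⟨p, hp, h1, h2⟩ := hmem
            obtain ⟨hp1, _, _, _⟩ := hC.1 p hp
            omega
          rw [Finset.sum_insert hnotmem, ← hc]
          have : dinc f (M + 1) 1 0 = f (2 ^ M) - f 0 := by
            simp only [dinc, Nat.add_sub_cancel]
            norm_num
          rw [this]
          ring

lemma exists_decomp2 : ∀ (M : ℕ), 1 ≤ M → ∀ (f : ℕ → ℂ) (s t : ℕ), s ≤ t → t ≤ 2 ^ M →
    ∃ C, Decomp f M s t 2 C := by
  intro M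
  induction M with
  | zero => omega
  | succ M ih =>
    intro _ f s t hst ht2
    rcases Nat.eq_or_lt_of_le hst with rfl | hlt
    · exact ⟨∅, decomp_nil f (M + 1) s 2⟩
    rcases Nat.eq_zero_or_pos M with rfl | hM
    · -- M + 1 = 1 : t ≤ 2, s < t, explicit
      have h2t : t ≤ 2 := by simpa using ht2
      have hs1 : s ≤ 1 := by omega
      interval_cases s <;> interval_cases t
      · -- s = 0, t = 1
        obtain ⟨C, hC⟩ := exists_decompL 1 f 1 (by norm_num)
        exact ⟨C, hC.mono (by norm_num)⟩
      · -- s = 0, t = 2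
        obtain ⟨C, hC⟩ := exists_decompR 1 f 1 (by norm_num) (by norm_num)
        obtain ⟨C', hC'⟩ := exists_decompL 1 f 1 (by norm_num)
        have hdisj : Disjoint C' C := by
          rw [Finset.disjoint_left]
          intro p hp hp'
          obtain ⟨_, _, _, x4⟩ := hC'.1 p hp
          obtain ⟨_, _, x3, _⟩ := hC.1 p hp'
          have hpos : 0 < 2 ^ (1 - p.1) := pow_pos (by norm_num) _
          nlinarith [x4.trans x3]
        have := decomp_union hC' (by simpa using hC) (by norm_num) (by norm_num) hdisj
        exact ⟨C' ∪ C, by simpa using this⟩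
      · -- s = 1, t = 2
        obtain ⟨C, hC⟩ := exists_decompR 1 f 1 (by norm_num) (by norm_num)
        exact ⟨C, by simpa using hC.mono one_le_two⟩
    · -- M ≥ 1
      by_cases hs0 : s = 0
      · subst hs0
        rcases Nat.eq_or_lt_of_le ht2 with rfl | htlt
        · -- full interval: two level-1 increments
          obtain ⟨C, hC⟩ := exists_decompR (M + 1) f (2 ^ M) (pow_pos (by norm_num) _) (by
            rw [pow_succ]; omega)
          obtain ⟨C', hC'⟩ := exists_decompL (M + 1) f (2 ^ M) (by
            rw [pow_succ]; have := pow_pos (show 0 < 2 by norm_num) M; omega)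
          have hdisj : Disjoint C' C := by
            rw [Finset.disjoint_left]
            intro p hp hp'
            obtain ⟨_, _, _, x4⟩ := hC'.1 p hp
            obtain ⟨_, _, x3, _⟩ := hC.1 p hp'
            have hpos : 0 < 2 ^ (M + 1 - p.1) := pow_pos (by norm_num) _
            nlinarith [x4.trans x3]
          have := decomp_union hC' hC (Nat.zero_le _) (by rw [pow_succ]; omega) hdisj
          exact ⟨C' ∪ C, this.mono (by norm_num)⟩
        · obtain ⟨C, hC⟩ := exists_decompL (M + 1) f t htlt
          exact ⟨C, hC.mono one_le_two⟩
      · rcases Nat.eq_or_lt_of_le ht2 with rfl | htlt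
        · obtain ⟨C, hC⟩ := exists_decompR (M + 1) f s (Nat.pos_of_ne_zero hs0) hst
          exact ⟨C, hC.mono one_le_two⟩
        · by_cases hleft : t ≤ 2 ^ M
          · obtain ⟨C, hC⟩ := ih hM f s t hst hleft
            exact ⟨_, decomp_left hC⟩
          · by_cases hright : 2 ^ M ≤ s
            · obtain ⟨C, hC⟩ := ih hM (fun n => f (2 ^ M + n)) (s - 2 ^ M) (t - 2 ^ M)
                (by omega) (by rw [pow_succ] at ht2; omega)
              have := decomp_right (f := f) hC
              rw [Nat.add_sub_cancel' hright, Nat.add_sub_cancel' (by omega : 2 ^ M ≤ t)] at this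
              exact ⟨_, this⟩
            · -- straddle : s < 2 ^ M < t
              push_neg at hleft hright
              obtain ⟨C1, hC1⟩ := exists_decompR M f s (Nat.pos_of_ne_zero hs0) (le_of_lt hright)
              obtain ⟨C2, hC2⟩ := exists_decompL M (fun n => f (2 ^ M + n)) (t - 2 ^ M)
                (by rw [pow_succ] at ht2; omega)
              have h1 := decomp_left (f := f) hC1
              have h2 := decomp_right (f := f) hC2
              rw [Nat.add_zero, Nat.add_sub_cancel' (by omega : 2 ^ M ≤ t)] at h2
              have hdisj : Disjoint (C1.image (fun p => (p.1 + 1, p.2)))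
                  (C2.image (fun p => (p.1 + 1, p.2 + 2 ^ p.1))) := by
                rw [Finset.disjoint_left]
                intro p hp hp'
                obtain ⟨_, _, _, x4⟩ := h1.1 p hp
                obtain ⟨_, _, x3, _⟩ := h2.1 p hp'
                have hpos : 0 < 2 ^ (M + 1 - p.1) := pow_pos (by norm_num) _
                nlinarith [x4.trans x3]
              have := decomp_union h1 h2 (le_of_lt hright) (by omega) hdisj
              exact ⟨_, this⟩

open scoped ENNReal

lemma ennreal_rpow_two (x : ℝ≥0∞) : x ^ (2 : ℝ) = x ^ (2 : ℕ) := by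
  rw [← ENNReal.rpow_natCast x 2]
  norm_num

lemma sqrt2_eq : ENNReal.ofReal (Real.sqrt 2) = (2 : ℝ≥0∞) ^ (1 / 2 : ℝ) := by
  rw [Real.sqrt_eq_rpow, ← ENNReal.ofReal_rpow_of_pos (by norm_num)]
  norm_num

lemma minkowski_sum {J : ℕ} (s : Finset ℕ) (F : ℕ → Fin J → ℝ≥0∞) :
    (∑ j : Fin J, (∑ l ∈ s, F l j) ^ (2 : ℝ)) ^ (1 / 2 : ℝ) ≤
      ∑ l ∈ s, (∑ j : Fin J, F l j ^ (2 : ℝ)) ^ (1 / 2 : ℝ) := by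
  induction s using Finset.cons_induction with
  | empty =>
    simp [ENNReal.zero_rpow_of_pos]
  | cons a s ha ih =>
    simp only [Finset.sum_cons]
    calc (∑ j : Fin J, (F a j + ∑ l ∈ s, F l j) ^ (2 : ℝ)) ^ (1 / 2 : ℝ)
        ≤ (∑ j : Fin J, F a j ^ (2 : ℝ)) ^ (1 / 2 : ℝ) +
          (∑ j : Fin J, (∑ l ∈ s, F l j) ^ (2 : ℝ)) ^ (1 / 2 : ℝ) :=
          ENNReal.Lp_add_le _ _ _ one_le_two
      _ ≤ _ := add_le_add le_rfl ih

lemma chain_bound (f : ℕ → ℂ) (M : ℕ) (hM : 1 ≤ M) (J : ℕ) (n : Fin (J + 1) → ℕ)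
    (mono : Monotone n) (hub : ∀ j, n j ≤ 2 ^ M) :
    (∑ j : Fin J, ((‖f (n j.succ) - f (n j.castSucc)‖₊ : ℝ≥0∞)) ^ 2) ^ (1 / 2 : ℝ) ≤
      ENNReal.ofReal (Real.sqrt 2) *
        ∑ l ∈ Finset.Icc 1 M,
          (∑ k ∈ Finset.range (2 ^ l), ((‖dinc f M l k‖₊ : ℝ≥0∞)) ^ 2) ^ (1 / 2 : ℝ) := by
  have hex : ∀ j : Fin J, ∃ C, Decomp f M (n j.castSucc) (n j.succ) 2 C := fun j =>
    exists_decomp2 M hM f _ _ (mono (Fin.castSucc_le_succ j)) (hub _)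
  choose C hC using hex
  set F : ℕ → Fin J → ℝ≥0∞ := fun l j =>
    (‖∑ p ∈ (C j).filter (fun p => p.1 = l), dinc f M p.1 p.2‖₊ : ℝ≥0∞) with hF
  -- Step 1: pointwise bound by sum over levels
  have step1 : ∀ j, (‖f (n j.succ) - f (n j.castSucc)‖₊ : ℝ≥0∞) ≤ ∑ l ∈ Finset.Icc 1 M, F l j := by
    intro j
    have hsplit' : ∑ l ∈ Finset.Icc 1 M, ∑ p ∈ (C j).filter (fun p => p.1 = l),
        dinc f M p.1 p.2 = ∑ p ∈ C j, dinc f M p.1 p.2 :=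
      Finset.sum_fiberwise_of_maps_to
        (fun p hp => Finset.mem_Icc.2 ⟨((hC j).1 p hp).1, ((hC j).1 p hp).2.1⟩) _
    have hsplit : f (n j.succ) - f (n j.castSucc) =
        ∑ l ∈ Finset.Icc 1 M, ∑ p ∈ (C j).filter (fun p => p.1 = l), dinc f M p.1 p.2 :=
      (hC j).2.2.trans hsplit'.symm
    rw [hsplit]
    calc (‖∑ l ∈ Finset.Icc 1 M, ∑ p ∈ (C j).filter (fun p => p.1 = l),
            dinc f M p.1 p.2‖₊ : ℝ≥0∞)
        ≤ ∑ l ∈ Finset.Icc 1 M, (‖∑ p ∈ (C j).filter (fun p => p.1 = l),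
            dinc f M p.1 p.2‖₊ : ℝ≥0∞) := by
          rw [← ENNReal.coe_finset_sum]
          exact ENNReal.coe_le_coe.2 (nnnorm_sum_le _ _)
      _ = ∑ l ∈ Finset.Icc 1 M, F l j := rfl
  -- Step 2+3: Minkowski
  have step2 : (∑ j : Fin J, ((‖f (n j.succ) - f (n j.castSucc)‖₊ : ℝ≥0∞)) ^ 2) ^ (1 / 2 : ℝ) ≤
      ∑ l ∈ Finset.Icc 1 M, (∑ j : Fin J, F l j ^ (2 : ℝ)) ^ (1 / 2 : ℝ) := by
    refine le_trans ?_ (minkowski_sum (Finset.Icc 1 M) F)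
    apply ENNReal.rpow_le_rpow _ (by norm_num)
    apply Finset.sum_le_sum
    intro j _
    rw [ennreal_rpow_two]
    exact pow_le_pow_left' (step1 j) 2
  refine step2.trans ?_
  -- Step 4: per-level bound
  rw [Finset.mul_sum]
  apply Finset.sum_le_sum
  intro l hl
  obtain ⟨hl1, hlM⟩ := Finset.mem_Icc.1 hl
  set S : Fin J → Finset ℕ := fun j => ((C j).filter (fun p => p.1 = l)).image Prod.snd with hS
  have hXpos : 0 < 2 ^ (M - l) := pow_pos (by norm_num) _
  -- rewrite inner sums over S j
  have hsum_eq : ∀ j, ∑ p ∈ (C j).filter (fun p => p.1 = l), ((‖dinc f M p.1 p.2‖₊ : ℝ≥0∞)) ^ 2 =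
      ∑ k ∈ S j, ((‖dinc f M l k‖₊ : ℝ≥0∞)) ^ 2 := by
    intro j
    rw [hS]
    rw [Finset.sum_image]
    · apply Finset.sum_congr rfl
      intro p hp
      rw [(Finset.mem_filter.1 hp).2]
    · intro p hp q hq hpq
      have hp1 := (Finset.mem_filter.1 hp).2
      have hq1 := (Finset.mem_filter.1 hq).2
      exact Prod.ext (hp1.trans hq1.symm) hpq
  have hcard : ∀ j, ((C j).filter (fun p => p.1 = l)).card ≤ 2 := fun j => (hC j).2.1 l
  have hFle : ∀ j, F l j ^ (2 : ℝ) ≤ 2 * ∑ k ∈ S j, ((‖dinc f M l k‖₊ : ℝ≥0∞)) ^ 2 := by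
    intro j
    have h1 : F l j ≤ ∑ p ∈ (C j).filter (fun p => p.1 = l), (‖dinc f M p.1 p.2‖₊ : ℝ≥0∞) := by
      rw [hF, ← ENNReal.coe_finset_sum]
      exact ENNReal.coe_le_coe.2 (nnnorm_sum_le _ _)
    calc F l j ^ (2 : ℝ)
        ≤ (∑ p ∈ (C j).filter (fun p => p.1 = l), (‖dinc f M p.1 p.2‖₊ : ℝ≥0∞)) ^ (2 : ℝ) :=
          ENNReal.rpow_le_rpow h1 (by norm_num)
      _ ≤ (((C j).filter (fun p => p.1 = l)).card : ℝ≥0∞) ^ ((2 : ℝ) - 1) *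
          ∑ p ∈ (C j).filter (fun p => p.1 = l), (‖dinc f M p.1 p.2‖₊ : ℝ≥0∞) ^ (2 : ℝ) :=
          ENNReal.rpow_sum_le_const_mul_sum_rpow _ _ one_le_two
      _ ≤ 2 * ∑ k ∈ S j, ((‖dinc f M l k‖₊ : ℝ≥0∞)) ^ 2 := by
          rw [← hsum_eq j]
          apply mul_le_mul' _ _
          · have h21 : (2 : ℝ) - 1 = 1 := by norm_num
            rw [h21, ENNReal.rpow_one]
            exact_mod_cast hcard j
          · apply Finset.sum_le_sum
            intro p _
            rw [ennreal_rpow_two]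
  -- disjointness of the S j
  have hdisj0 : ∀ j j' : Fin J, j < j' → Disjoint (S j) (S j') := by
    intro j j' hlt
    rw [Finset.disjoint_left]
    intro k hk hk'
    simp only [hS, Finset.mem_image] at hk hk'
    obtain ⟨p, hp, rfl⟩ := hk
    obtain ⟨q, hq, hqk⟩ := hk'
    have hpf := Finset.mem_filter.1 hp
    have hqf := Finset.mem_filter.1 hq
    obtain ⟨_, _, _, x4⟩ := (hC j).1 p hpf.1
    obtain ⟨_, _, x3, _⟩ := (hC j').1 q hqf.1
    rw [hpf.2] at x4
    rw [hqf.2] at x3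
    rw [hqk] at x3
    have hle : n j.succ ≤ n j'.castSucc := by
      apply mono
      rw [Fin.le_def]
      simp only [Fin.val_succ, Fin.coe_castSucc]
      exact Fin.lt_iff_val_lt_val.1 hlt
    nlinarith [x4.trans (hle.trans x3)]
  have hdisj : ∀ j j' : Fin J, j ≠ j' → Disjoint (S j) (S j') := fun j j' hne =>
    (lt_or_gt_of_ne hne).elim (hdisj0 j j') (fun h => (hdisj0 j' j h).symm)
  have hsub : ∀ j, S j ⊆ Finset.range (2 ^ l) := by
    intro j k hk
    simp only [hS, Finset.mem_image] at hk
    obtain ⟨p, hp, rfl⟩ := hk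
    have hpf := Finset.mem_filter.1 hp
    obtain ⟨_, _, _, x4⟩ := (hC j).1 p hpf.1
    rw [hpf.2] at x4
    have h2M : 2 ^ M = 2 ^ l * 2 ^ (M - l) := by
      rw [← pow_add, Nat.add_sub_cancel' hlM]
    have := x4.trans (hub j.succ)
    rw [h2M] at this
    have : p.2 + 1 ≤ 2 ^ l := by
      by_contra hcon
      push_neg at hcon
      nlinarith
    exact Finset.mem_range.2 (by omega)
  -- sum the level bound
  calc (∑ j : Fin J, F l j ^ (2 : ℝ)) ^ (1 / 2 : ℝ)
      ≤ (∑ j : Fin J, 2 * ∑ k ∈ S j, ((‖dinc f M l k‖₊ : ℝ≥0∞)) ^ 2) ^ (1 / 2 : ℝ) :=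
        ENNReal.rpow_le_rpow (Finset.sum_le_sum fun j _ => hFle j) (by norm_num)
    _ = (2 * ∑ j : Fin J, ∑ k ∈ S j, ((‖dinc f M l k‖₊ : ℝ≥0∞)) ^ 2) ^ (1 / 2 : ℝ) := by
        rw [← Finset.mul_sum]
    _ ≤ (2 * ∑ k ∈ Finset.range (2 ^ l), ((‖dinc f M l k‖₊ : ℝ≥0∞)) ^ 2) ^ (1 / 2 : ℝ) := by
        apply ENNReal.rpow_le_rpow _ (by norm_num)
        apply mul_le_mul_right _ _
        rw [← Finset.sum_biUnion]
        · apply Finset.sum_le_sum_of_subset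
          intro k hk
          obtain ⟨j, _, hj⟩ := Finset.mem_biUnion.1 hk
          exact hsub j hj
        · intro j _ j' _ hne
          exact hdisj j j' hne
    _ = ENNReal.ofReal (Real.sqrt 2) *
        (∑ k ∈ Finset.range (2 ^ l), ((‖dinc f M l k‖₊ : ℝ≥0∞)) ^ 2) ^ (1 / 2 : ℝ) := by
        rw [ENNReal.mul_rpow_of_nonneg _ _ (by norm_num), sqrt2_eq]


end RMAux

open Set ENNReal

/-- One-parameter 2-variation seminorm of `a` over the set `I ⊆ ℝ`:
the supremum over finite increasing chains in `I` of the ℓ² sum of consecutive differences. -/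
noncomputable def var2 (a : ℝ → ℂ) (I : Set ℝ) : ℝ≥0∞ :=
  ⨆ (J : ℕ) (u : Fin (J + 1) → ℝ) (_ : StrictMono u) (_ : ∀ j, u j ∈ I),
    (∑ j : Fin J, ((‖a (u j.succ) - a (u j.castSucc)‖₊ : ℝ≥0∞)) ^ 2) ^ (1 / 2 : ℝ)

/-- One-parameter Rademacher–Menshov inequality. -/
theorem stmt0 (L : ℕ) (hL : 0 < L) (a : ℝ → ℂ)
    (ha : ContinuousOn a (Set.Icc 1 (1 + 2 ^ L))) :
    var2 a (Set.Icc 1 (1 + 2 ^ L)) ≤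
      ENNReal.ofReal (Real.sqrt 2) *
        ∑' l : ℕ+,
          (∑ j ∈ Finset.Icc (1 : ℕ) (2 ^ (l : ℕ)),
              ((‖a (1 + (j : ℝ) * (2 : ℝ) ^ ((L : ℝ) - ((l : ℕ) : ℝ)))
                  - a (1 + ((j : ℝ) - 1) * (2 : ℝ) ^ ((L : ℝ) - ((l : ℕ) : ℝ)))‖₊ : ℝ≥0∞)) ^ 2)
            ^ (1 / 2 : ℝ) := by
  classical
  have two_pos : (0 : ℝ) < 2 := by norm_num
  set G : ℕ → ℝ≥0∞ := fun l =>
    (∑ j ∈ Finset.Icc (1 : ℕ) (2 ^ l),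
        ((‖a (1 + (j : ℝ) * (2 : ℝ) ^ ((L : ℝ) - (l : ℝ)))
            - a (1 + ((j : ℝ) - 1) * (2 : ℝ) ^ ((L : ℝ) - (l : ℝ)))‖₊ : ℝ≥0∞)) ^ 2)
      ^ (1 / 2 : ℝ) with hG
  have hRHS : ENNReal.ofReal (Real.sqrt 2) *
      ∑' l : ℕ+,
        (∑ j ∈ Finset.Icc (1 : ℕ) (2 ^ (l : ℕ)),
            ((‖a (1 + (j : ℝ) * (2 : ℝ) ^ ((L : ℝ) - ((l : ℕ) : ℝ)))
                - a (1 + ((j : ℝ) - 1) * (2 : ℝ) ^ ((L : ℝ) - ((l : ℕ) : ℝ)))‖₊ : ℝ≥0∞)) ^ 2)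
          ^ (1 / 2 : ℝ) = ENNReal.ofReal (Real.sqrt 2) * ∑' l : ℕ+, G (l : ℕ) := rfl
  rw [var2, hRHS]
  refine iSup_le fun J => iSup_le fun u => iSup_le fun hu => iSup_le fun hmem => ?_
  refine ENNReal.le_of_forall_pos_le_add fun ε hε _ => ?_
  set ε' : ℝ := (ε : ℝ) / (2 * (J + 1)) with hε'
  have hε'pos : 0 < ε' := by
    apply div_pos (by exact_mod_cast hε) (by positivity)
  -- uniform continuity
  have hucont := isCompact_Icc.uniformContinuousOn_of_continuous ha
  rw [Metric.uniformContinuousOn_iff] at hucont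
  obtain ⟨δ, hδpos, hδ⟩ := hucont (ε' / 2) (by positivity)
  obtain ⟨K, hK⟩ := exists_pow_lt_of_lt_one hδpos (by norm_num : (1 : ℝ) / 2 < 1)
  set M := L + K with hMdef
  have hML : L ≤ M := Nat.le_add_right _ _
  have hM1 : 1 ≤ M := le_trans hL hML
  set h : ℝ := (2 : ℝ) ^ ((L : ℝ) - (M : ℝ)) with hh
  have hhpos : 0 < h := Real.rpow_pos_of_pos two_pos _
  have hhδ : h < δ := by
    have heq : h = (1 / 2 : ℝ) ^ K := by
      rw [hh, hMdef, div_pow, one_pow]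
      rw [show (L : ℝ) - (↑(L + K) : ℝ) = -(K : ℝ) by push_cast; ring]
      rw [Real.rpow_neg two_pos.le, Real.rpow_natCast]
      exact (one_div _).symm
    rw [heq]; exact hK
  have h2M : (2 : ℝ) ^ (M : ℕ) * h = 2 ^ (L : ℕ) := by
    rw [hh, ← Real.rpow_natCast 2 M, ← Real.rpow_add two_pos, ← Real.rpow_natCast 2 L]
    congr 1
    ring
  -- the grid chain
  set n : Fin (J + 1) → ℕ := fun j => ⌊(u j - 1) / h⌋₊ with hn
  have hx0 : ∀ j, (0 : ℝ) ≤ (u j - 1) / h := fun j =>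
    div_nonneg (by linarith [(hmem j).1]) hhpos.le
  have hnub : ∀ j, n j ≤ 2 ^ M := by
    intro j
    have hle : (u j - 1) / h ≤ ((2 ^ M : ℕ) : ℝ) := by
      rw [div_le_iff₀ hhpos]
      push_cast
      calc u j - 1 ≤ 2 ^ (L : ℕ) := by linarith [(hmem j).2]
        _ = (2 : ℝ) ^ (M : ℕ) * h := h2M.symm
    calc n j ≤ ⌊((2 ^ M : ℕ) : ℝ)⌋₊ := Nat.floor_le_floor hle
      _ = 2 ^ M := Nat.floor_natCast _
  have hmono : Monotone n := by
    intro i j hij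
    apply Nat.floor_le_floor
    have hij' := hu.monotone hij
    gcongr
  set g : Fin (J + 1) → ℝ := fun j => 1 + n j * h with hg
  have hgle : ∀ j, g j ≤ u j := by
    intro j
    have := Nat.floor_le (hx0 j)
    have h2 : (n j : ℝ) * h ≤ u j - 1 := by
      calc (n j : ℝ) * h ≤ (u j - 1) / h * h := by
            apply mul_le_mul_of_nonneg_right this hhpos.le
        _ = u j - 1 := div_mul_cancel₀ _ hhpos.ne'
    simp only [hg]; linarith
  have hclose : ∀ j, dist (u j) (g j) < δ := by
    intro j
    rw [Real.dist_eq, abs_of_nonneg (by linarith [hgle j])]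
    have hlt : (u j - 1) / h < n j + 1 := Nat.lt_floor_add_one _
    have : u j - 1 < (n j + 1) * h := by
      calc u j - 1 = (u j - 1) / h * h := (div_mul_cancel₀ _ hhpos.ne').symm
        _ < (n j + 1) * h := by apply mul_lt_mul_of_pos_right hlt hhpos
    have : u j - g j < h := by simp only [hg]; push_cast at this ⊢; linarith
    linarith
  have hgmem : ∀ j, g j ∈ Set.Icc (1 : ℝ) (1 + 2 ^ L) := by
    intro j
    constructor
    · have : (0 : ℝ) ≤ (n j : ℝ) * h := by positivity
      simp only [hg]; linarith
    · exact (hgle j).trans (hmem j).2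
  have hadist : ∀ j, dist (a (u j)) (a (g j)) < ε' / 2 := fun j =>
    hδ _ (hmem j) _ (hgmem j) (hclose j)
  set f : ℕ → ℂ := fun m => a (1 + m * h) with hf
  have hfg : ∀ j, f (n j) = a (g j) := fun j => rfl
  -- pointwise comparison
  have key : ∀ j : Fin J, (‖a (u j.succ) - a (u j.castSucc)‖₊ : ℝ≥0∞) ≤
      (‖f (n j.succ) - f (n j.castSucc)‖₊ : ℝ≥0∞) + ENNReal.ofReal ε' := by
    intro j
    have e1 : ‖a (u j.succ) - a (g j.succ)‖ < ε' / 2 := by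
      rw [← dist_eq_norm]
      exact hadist j.succ
    have e2 : ‖a (g j.castSucc) - a (u j.castSucc)‖ < ε' / 2 := by
      rw [← dist_eq_norm, dist_comm]
      exact hadist j.castSucc
    have hident : a (u j.succ) - a (u j.castSucc) =
        (f (n j.succ) - f (n j.castSucc)) + ((a (u j.succ) - a (g j.succ)) +
          (a (g j.castSucc) - a (u j.castSucc))) := by
      rw [hfg, hfg]; ring
    have hc : ∀ z : ℂ, (‖z‖₊ : ℝ≥0∞) = ENNReal.ofReal ‖z‖ := fun z => (ofReal_norm z).symm
    rw [hc, hc, hident]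
    calc ENNReal.ofReal ‖(f (n j.succ) - f (n j.castSucc)) + ((a (u j.succ) - a (g j.succ)) +
          (a (g j.castSucc) - a (u j.castSucc)))‖
        ≤ ENNReal.ofReal (‖f (n j.succ) - f (n j.castSucc)‖ + ε') := by
          apply ENNReal.ofReal_le_ofReal
          calc ‖_ + _‖ ≤ ‖f (n j.succ) - f (n j.castSucc)‖ + ‖(a (u j.succ) - a (g j.succ)) +
                (a (g j.castSucc) - a (u j.castSucc))‖ := norm_add_le _ _
            _ ≤ ‖f (n j.succ) - f (n j.castSucc)‖ + (‖a (u j.succ) - a (g j.succ)‖ +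
                ‖a (g j.castSucc) - a (u j.castSucc)‖) := by
                have := norm_add_le (a (u j.succ) - a (g j.succ))
                  (a (g j.castSucc) - a (u j.castSucc))
                linarith
            _ ≤ ‖f (n j.succ) - f (n j.castSucc)‖ + ε' := by linarith
      _ = ENNReal.ofReal ‖f (n j.succ) - f (n j.castSucc)‖ + ENNReal.ofReal ε' := by
          rw [ENNReal.ofReal_add (norm_nonneg _) hε'pos.le]
  -- level sums match the statement's terms
  have hlevel : ∀ l, 1 ≤ l → l ≤ M →
      (∑ k ∈ Finset.range (2 ^ l), ((‖dinc f M l k‖₊ : ℝ≥0∞)) ^ 2) ^ (1 / 2 : ℝ) = G l := by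
    intro l hl1 hlM
    have hpoint : ∀ m : ℕ, ((m * 2 ^ (M - l) : ℕ) : ℝ) * h =
        (m : ℝ) * (2 : ℝ) ^ ((L : ℝ) - (l : ℝ)) := by
      intro m
      push_cast
      rw [mul_assoc, ← Real.rpow_natCast 2 (M - l), Nat.cast_sub hlM, hh,
        ← Real.rpow_add two_pos]
      congr 2
      ring
    have hterm : ∀ k : ℕ, dinc f M l k =
        a (1 + ((1 + k : ℕ) : ℝ) * (2 : ℝ) ^ ((L : ℝ) - (l : ℝ)))
          - a (1 + (((1 + k : ℕ) : ℝ) - 1) * (2 : ℝ) ^ ((L : ℝ) - (l : ℝ))) := by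
      intro k
      simp only [dinc, hf]
      rw [hpoint (k + 1), hpoint k]
      push_cast
      ring_nf
    rw [hG]
    congr 1
    rw [← Finset.Ico_add_one_right_eq_Icc, Finset.sum_Ico_eq_sum_range]
    norm_num
    apply Finset.sum_congr rfl
    intro k _
    rw [hterm k]
    push_cast
    ring_nf
  -- assemble
  calc (∑ j : Fin J, ((‖a (u j.succ) - a (u j.castSucc)‖₊ : ℝ≥0∞)) ^ 2) ^ (1 / 2 : ℝ)
      ≤ (∑ j : Fin J, ((‖f (n j.succ) - f (n j.castSucc)‖₊ : ℝ≥0∞) +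
          ENNReal.ofReal ε') ^ (2 : ℝ)) ^ (1 / 2 : ℝ) := by
        apply ENNReal.rpow_le_rpow _ (by norm_num)
        apply Finset.sum_le_sum
        intro j _
        rw [ennreal_rpow_two]
        exact pow_le_pow_left' (key j) 2
    _ ≤ (∑ j : Fin J, ((‖f (n j.succ) - f (n j.castSucc)‖₊ : ℝ≥0∞)) ^ (2 : ℝ)) ^ (1 / 2 : ℝ) +
        (∑ _j : Fin J, (ENNReal.ofReal ε') ^ (2 : ℝ)) ^ (1 / 2 : ℝ) :=
        ENNReal.Lp_add_le _ _ _ one_le_two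
    _ ≤ ENNReal.ofReal (Real.sqrt 2) * ∑' l : ℕ+, G (l : ℕ) + ↑ε := by
        apply add_le_add
        · -- main term
          have hb : (∑ j : Fin J, ((‖f (n j.succ) - f (n j.castSucc)‖₊ : ℝ≥0∞)) ^ (2 : ℝ))
              ^ (1 / 2 : ℝ) =
              (∑ j : Fin J, ((‖f (n j.succ) - f (n j.castSucc)‖₊ : ℝ≥0∞)) ^ 2)
              ^ (1 / 2 : ℝ) := by
            congr 1
            exact Finset.sum_congr rfl fun j _ => ennreal_rpow_two _
          rw [hb]
          refine (chain_bound f M hM1 J n hmono hnub).trans ?_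
          apply mul_le_mul_right
          have hsum_eq : ∑ l ∈ Finset.Icc 1 M,
              (∑ k ∈ Finset.range (2 ^ l), ((‖dinc f M l k‖₊ : ℝ≥0∞)) ^ 2) ^ (1 / 2 : ℝ) =
              ∑ i ∈ Finset.range M, G (1 + i) := by
            rw [← Finset.Ico_add_one_right_eq_Icc, Finset.sum_Ico_eq_sum_range]
            norm_num
            exact Finset.sum_congr rfl fun i hi => hlevel (1 + i) (by omega)
              (by have := Finset.mem_range.1 hi; omega)
          rw [hsum_eq]
          have : ∑ i ∈ Finset.range M, G (1 + i) =
              ∑ i ∈ Finset.range M, (fun i : ℕ => G ((i.succPNat : ℕ+) : ℕ)) i := by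
            apply Finset.sum_congr rfl
            intro i _
            show G (1 + i) = G ((i.succPNat : ℕ+) : ℕ)
            have hco : ((i.succPNat : ℕ+) : ℕ) = 1 + i := by
              rw [Nat.succPNat_coe]
              omega
            rw [hco]
          rw [this]
          refine (ENNReal.sum_le_tsum (Finset.range M)).trans ?_
          rw [← Equiv.pnatEquivNat.symm.tsum_eq (fun l : ℕ+ => G (l : ℕ))]
          apply le_of_eq
          rfl
        · -- error term
          have hcard : ∑ _j : Fin J, (ENNReal.ofReal ε') ^ (2 : ℝ) =
              (J : ℝ≥0∞) * (ENNReal.ofReal ε') ^ (2 : ℝ) := by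
            rw [Finset.sum_const, Finset.card_univ, Fintype.card_fin, nsmul_eq_mul]
          rw [hcard, ENNReal.mul_rpow_of_nonneg _ _ (by norm_num), ← ENNReal.rpow_mul]
          norm_num
          calc (J : ℝ≥0∞) ^ (1 / 2 : ℝ) * ENNReal.ofReal ε'
              ≤ ((J : ℝ≥0∞) + 1) * ENNReal.ofReal ε' := by
                apply mul_le_mul_left
                have h1 : (J : ℝ≥0∞) ≤ ((J + 1 : ℕ) : ℝ≥0∞) ^ (2 : ℝ) := by
                  rw [ENNReal.rpow_two]
                  have : (J : ℕ) ≤ (J + 1) ^ 2 := by nlinarith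
                  exact_mod_cast this
                calc (J : ℝ≥0∞) ^ (1 / 2 : ℝ)
                    ≤ (((J + 1 : ℕ) : ℝ≥0∞) ^ (2 : ℝ)) ^ (1 / 2 : ℝ) :=
                      ENNReal.rpow_le_rpow h1 (by norm_num)
                  _ = ((J + 1 : ℕ) : ℝ≥0∞) := by
                      rw [← ENNReal.rpow_mul]
                      norm_num
                  _ = (J : ℝ≥0∞) + 1 := by push_cast; ring
            _ = ENNReal.ofReal ((J + 1 : ℝ) * ε') := by
                rw [ENNReal.ofReal_mul (by positivity)]
                congr 1
                rw [ENNReal.ofReal_add (by positivity) (by norm_num)]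
                simp [ENNReal.ofReal_natCast]
            _ ≤ ↑ε := by
                rw [hε']
                have : (J + 1 : ℝ) * ((ε : ℝ) / (2 * (J + 1))) = (ε : ℝ) / 2 := by
                  field_simp
                rw [this]
                calc ENNReal.ofReal ((ε : ℝ) / 2) ≤ ENNReal.ofReal (ε : ℝ) := by
                      apply ENNReal.ofReal_le_ofReal
                      have : (0:ℝ) ≤ (ε : ℝ) := ε.2
                      linarith
                  _ = ↑ε := ENNReal.ofReal_coe_nnreal
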